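/- Fee-less two-point arbitrage between two constant product AMMs is profitable if and only if the prices differ: the profit function g(δ) = x₂·(y₁·δ/(x₁+δ)) / (y₂ + y₁·δ/(x₁+δ)) − δ satisfies: there exists δ > 0 with g(δ) > 0 if and only if y₁/x₁ > y₂/x₂. -/

import Mathlib

/-- Fee-less two-point arbitrage is profitable for some input iff the prices differ. -/
theorem cpamm_arbitrage_profitable_iff
    (x₁ y₁ x₂ y₂ : ℝ) (hx₁ : 0 < x₁) (hy₁ : 0 < y₁) (hx₂ : 0 < x₂) (hy₂ : 0 < y₂) :
    (∃ δ : ℝ, 0 < δ ∧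
        x₂ * (y₁ * δ / (x₁ + δ)) / (y₂ + y₁ * δ / (x₁ + δ)) - δ > 0) ↔
      y₁ / x₁ > y₂ / x₂ := by
  constructor
  · rintro ⟨δ, hδ, hg⟩
    have hx₁δ : 0 < x₁ + δ := by linarith
    have hD : 0 < y₂ + y₁ * δ / (x₁ + δ) := by positivity
    rw [gt_iff_lt, sub_pos, lt_div_iff₀ hD] at hg
    rw [gt_iff_lt, div_lt_div_iff₀ hx₂ hx₁]
    have hne : x₁ + δ ≠ 0 := hx₁δ.ne'
    field_simp at hg
    nlinarith [mul_pos hδ hδ, mul_pos hy₂ hδ, mul_pos hy₁ hδ]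
  · intro h
    rw [gt_iff_lt, div_lt_div_iff₀ hx₂ hx₁] at h
    set δ : ℝ := (y₁ * x₂ - y₂ * x₁) / (2 * (y₁ + y₂)) with hδdef
    have hnum : 0 < y₁ * x₂ - y₂ * x₁ := by linarith
    have hden : 0 < 2 * (y₁ + y₂) := by linarith
    have hδ : 0 < δ := div_pos hnum hden
    refine ⟨δ, hδ, ?_⟩
    have hx₁δ : 0 < x₁ + δ := by linarith
    have hD : 0 < y₂ + y₁ * δ / (x₁ + δ) := by positivity
    have key : y₂ * x₁ + (y₂ + y₁) * δ < y₁ * x₂ := by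
      have : (y₂ + y₁) * δ < y₁ * x₂ - y₂ * x₁ := by
        calc (y₂ + y₁) * ((y₁ * x₂ - y₂ * x₁) / (2 * (y₁ + y₂)))
            < (y₂ + y₁) * ((y₁ * x₂ - y₂ * x₁) / (y₁ + y₂)) := by
              apply mul_lt_mul_of_pos_left _ (by linarith)
              apply div_lt_div_of_pos_left hnum (by linarith) (by linarith)
          _ = y₁ * x₂ - y₂ * x₁ := by
              field_simp
              ring
      linarith
    rw [gt_iff_lt, sub_pos, lt_div_iff₀ hD]
    have hne : x₁ + δ ≠ 0 := hx₁δ.ne'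
    field_simp
    nlinarith [mul_pos hδ hx₁δ]
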